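/- arXiv:1809.03057 — 2 statements merged into one kernel-verified Lean document; each statement's English description precedes it below -/
import Mathlib

section
/- For every nonterminal history h ∈ H \ Z and every action a ∈ A(h), the baseline-enhanced sampled history-action value has the same expectation as the plain sampled history-action value: E_{z∼ξ}[û_i^b(σ,h,a|z)] = E_{z∼ξ}[û_i(σ,h,a|z)]. -/
open Finset

variable {A : Type*} [Fintype A] [DecidableEq A]

/-- The set of legal actions at history `h`: those `a` with `h ++ [a] ∈ H`. -/
def legal (H : Finset (List A)) (h : List A) : Finset A :=
  Finset.univ.filter fun a => h ++ [a] ∈ H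

/-- Product of `f (h', a)` over all prefix steps `h'·a ⊑ h` of the history `h`.
With `f = ξ` this is the sampling probability `q(h)`; note `pathProd f [] = 1`. -/
def pathProd (f : List A → A → ℝ) (h : List A) : ℝ :=
  ∏ k : Fin h.length, f (h.take (k : ℕ)) (h.get k)

/-- `π^σ(h, z)`: product of `σ (h', a)` over all prefix steps `h'·a` with `h ⊏ h'·a ⊑ z`. -/
def sfxProd (σ : List A → A → ℝ) (h z : List A) : ℝ :=
  ∏ k : Fin z.length, if h.length ≤ (k : ℕ) then σ (z.take (k : ℕ)) (z.get k) else 1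

/-- `π^σ_{-i}(h)`: product of `σ (h', a)` over all prefix steps `h'·a ⊑ h` with `τ h' ≠ i`. -/
def oppProd {N : Type*} [DecidableEq N] (σ : List A → A → ℝ) (τ : List A → N) (i : N)
    (h : List A) : ℝ :=
  ∏ k : Fin h.length, if τ (h.take (k : ℕ)) ≠ i then σ (h.take (k : ℕ)) (h.get k) else 1

/-- The expected value `u_i^σ(h) = Σ_{z ∈ Z, h ⊑ z} π^σ(h,z)·u_i(z)`. -/
def expUtil (σ : List A → A → ℝ) (u : List A → ℝ) (Z : Finset (List A)) (h : List A) : ℝ :=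
  ∑ z ∈ Z.filter (fun z => h <+: z), sfxProd σ h z * u z

/-- The plain sampled history value `û_i(σ, h | z)`:
`u_i(h)` if `h = z`, `Σ_{a ∈ A(h)} σ(h,a)·û_i(σ,h,a|z)` if `h ⊏ z`, and `0` otherwise,
where `û_i(σ,h,a|z) = û_i(σ,h·a|z)/ξ(h,a)` if `h·a ⊑ z` and `0` otherwise. -/
noncomputable def uhat (ξ σ : List A → A → ℝ) (u : List A → ℝ) (H : Finset (List A))
    (z : List A) (h : List A) : ℝ :=
  if h = z then u z
  else if h <+: z then
    ∑ a ∈ legal H h, σ h a *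
      (if hpa : h ++ [a] <+: z then uhat ξ σ u H z (h ++ [a]) / ξ h a else 0)
  else 0
termination_by z.length - h.length
decreasing_by
  have := hpa.length_le
  simp only [List.length_append, List.length_singleton] at this ⊢
  omega

/-- The plain sampled history-action value `û_i(σ, h, a | z)`. -/
noncomputable def uhatA (ξ σ : List A → A → ℝ) (u : List A → ℝ) (H : Finset (List A))
    (z : List A) (h : List A) (a : A) : ℝ :=
  if h ++ [a] <+: z then uhat ξ σ u H z (h ++ [a]) / ξ h a else 0

/-- The baseline-enhanced sampled history value `û_i^b(σ, h | z)`: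
`u_i(h)` if `h = z`, `Σ_{a ∈ A(h)} σ(h,a)·û_i^b(σ,h,a|z)` if `h ⊏ z`, and `0` otherwise,
where `û_i^b(σ,h,a|z) = b(h,a) + (û_i^b(σ,h·a|z) − b(h,a))/ξ(h,a)` if `h·a ⊑ z`,
`b(h,a)` if `h ⊏ z` and `h·a ⋢ z`, and `0` otherwise. -/
noncomputable def uhatB (ξ σ : List A → A → ℝ) (u : List A → ℝ) (H : Finset (List A))
    (b : List A → A → ℝ) (z : List A) (h : List A) : ℝ :=
  if h = z then u z
  else if h <+: z then
    ∑ a ∈ legal H h, σ h a *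
      (if hpa : h ++ [a] <+: z then b h a + (uhatB ξ σ u H b z (h ++ [a]) - b h a) / ξ h a
       else b h a)
  else 0
termination_by z.length - h.length
decreasing_by
  have := hpa.length_le
  simp only [List.length_append, List.length_singleton] at this ⊢
  omega

/-- The baseline-enhanced sampled history-action value `û_i^b(σ, h, a | z)`. -/
noncomputable def uhatBA (ξ σ : List A → A → ℝ) (u : List A → ℝ) (H : Finset (List A))
    (b : List A → A → ℝ) (z : List A) (h : List A) (a : A) : ℝ :=
  if h ++ [a] <+: z then b h a + (uhatB ξ σ u H b z (h ++ [a]) - b h a) / ξ h a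
  else if h <+: z ∧ h ≠ z then b h a
  else 0


section AuxLemmas

omit [Fintype A] in
lemma pathProd_append (f : List A → A → ℝ) (h : List A) (a : A) :
    pathProd f (h ++ [a]) = pathProd f h * f h a := by
  unfold pathProd
  have hl : (h ++ [a]).length = h.length + 1 := by simp
  rw [← Fin.prod_congr' _ hl.symm, Fin.prod_univ_castSucc]
  congr 1
  · apply Finset.prod_congr rfl
    intro k _
    congr 1
    · simp [List.take_append_of_le_length k.2.le]
    · simp [List.get_eq_getElem, List.getElem_append_left k.2]
  · simp [List.get_eq_getElem, List.getElem_concat_length, List.take_left]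

omit [Fintype A] [DecidableEq A] in
lemma exists_snoc_prefix {h z : List A} (hp : h <+: z) (hne : h ≠ z) :
    ∃ a, h ++ [a] <+: z := by
  obtain ⟨t, rfl⟩ := hp
  cases t with
  | nil => simp at hne
  | cons a t' => exact ⟨a, t', by simp⟩

omit [Fintype A] [DecidableEq A] in
lemma snoc_prefix_unique {h z : List A} {a a' : A} (h1 : h ++ [a] <+: z)
    (h2 : h ++ [a'] <+: z) : a = a' := by
  have := List.prefix_of_prefix_length_le h1 h2 (by simp)
  have := this.eq_of_length (by simp)
  simpa using this

lemma sum_partition (H Z : Finset (List A))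
    (hclosed : ∀ h ∈ H, ∀ h' : List A, h' <+: h → h' ∈ H) (hZH : Z ⊆ H)
    (f : List A → ℝ) (h : List A) (hhnt : h ∉ Z) :
    ∑ z ∈ Z.filter (fun z => h <+: z), f z
      = ∑ a ∈ legal H h, ∑ z ∈ Z.filter (fun z => h ++ [a] <+: z), f z := by
  rw [← Finset.sum_biUnion]
  · apply Finset.sum_congr _ (fun _ _ => rfl)
    ext z
    simp only [Finset.mem_biUnion, Finset.mem_filter, legal, Finset.mem_univ, true_and]
    constructor
    · rintro ⟨hz, hp⟩
      have hne : h ≠ z := fun e => hhnt (e ▸ hz)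
      obtain ⟨a, hpa⟩ := exists_snoc_prefix hp hne
      exact ⟨a, hclosed z (hZH hz) _ hpa, hz, hpa⟩
    · rintro ⟨a, _, hz, hpa⟩
      exact ⟨hz, ((h.prefix_append [a]).trans hpa)⟩
  · intro a _ a' _ hne
    simp only [Finset.disjoint_left, Finset.mem_filter]
    rintro z ⟨hz, hpa⟩ ⟨hz', hpa'⟩
    exact hne (snoc_prefix_unique hpa hpa')

omit [Fintype A] in
lemma filter_eq_singleton (H Z : Finset (List A)) (hZH : Z ⊆ H)
    (hterm : ∀ z ∈ Z, ∀ h ∈ H, z <+: h → z = h) {h : List A} (hhZ : h ∈ Z) :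
    Z.filter (fun z => h <+: z) = {h} := by
  ext z
  simp only [Finset.mem_filter, Finset.mem_singleton]
  constructor
  · rintro ⟨hz, hp⟩; exact (hterm h hhZ z (hZH hz) hp).symm
  · rintro rfl; exact ⟨hhZ, List.prefix_rfl⟩

lemma qsum (H Z : Finset (List A))
    (hclosed : ∀ h ∈ H, ∀ h' : List A, h' <+: h → h' ∈ H) (hZH : Z ⊆ H)
    (hreach : ∀ h ∈ H, ∃ z ∈ Z, h <+: z)
    (hterm : ∀ z ∈ Z, ∀ h ∈ H, z <+: h → z = h)
    (ξ : List A → A → ℝ)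
    (hξsum : ∀ h ∈ H, h ∉ Z → ∑ a ∈ legal H h, ξ h a = 1) :
    ∀ n : ℕ, ∀ h ∈ H, (∀ z ∈ Z, z.length ≤ h.length + n) →
      ∑ z ∈ Z.filter (fun z => h <+: z), pathProd ξ z = pathProd ξ h := by
  intro n
  induction n with
  | zero =>
    intro h hh hb
    by_cases hhZ : h ∈ Z
    · rw [filter_eq_singleton H Z hZH hterm hhZ, Finset.sum_singleton]
    · obtain ⟨z, hz, hp⟩ := hreach h hh
      have hne : h ≠ z := fun e => hhZ (e ▸ hz)
      have h1 : h.length < z.length :=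
        lt_of_le_of_ne hp.length_le (fun e => hne (hp.eq_of_length e))
      have := hb z hz; omega
  | succ n ih =>
    intro h hh hb
    by_cases hhZ : h ∈ Z
    · rw [filter_eq_singleton H Z hZH hterm hhZ, Finset.sum_singleton]
    · rw [sum_partition H Z hclosed hZH _ h hhZ]
      have : ∀ a ∈ legal H h,
          ∑ z ∈ Z.filter (fun z => h ++ [a] <+: z), pathProd ξ z = pathProd ξ (h ++ [a]) := by
        intro a ha
        have haH : h ++ [a] ∈ H := by simpa [legal] using ha
        exact ih (h ++ [a]) haH (fun z hz => by have := hb z hz; simp; omega)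
      rw [Finset.sum_congr rfl this]
      simp_rw [pathProd_append]
      rw [← Finset.mul_sum, hξsum h hh hhZ, mul_one]

omit [Fintype A] in
lemma key_sum (Z : Finset (List A)) (q B U : List A → ℝ) (bb xi ph pha : ℝ)
    (hxi : xi ≠ 0) (h : List A) (a : A)
    (hqh : ∑ z ∈ Z.filter (fun z => h <+: z), q z = ph)
    (hq : ∑ z ∈ Z.filter (fun z => h ++ [a] <+: z), q z = pha)
    (hpha : pha = ph * xi)
    (hG : ∑ z ∈ Z.filter (fun z => h ++ [a] <+: z), q z * (B z - U z) = 0) :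
    ∑ z ∈ Z.filter (fun z => h <+: z), q z *
      ((if h ++ [a] <+: z then bb + (B z - bb) / xi else bb)
       - (if h ++ [a] <+: z then U z / xi else 0)) = 0 := by
  have step : ∀ z ∈ Z.filter (fun z => h <+: z), q z *
      ((if h ++ [a] <+: z then bb + (B z - bb) / xi else bb)
       - (if h ++ [a] <+: z then U z / xi else 0))
      = q z * bb + (if h ++ [a] <+: z then q z * ((B z - U z - bb) / xi) else 0) := by
    intro z _
    by_cases hp : h ++ [a] <+: z
    · simp only [hp, if_true]
      field_simp
      ring
    · simp [hp]
  rw [Finset.sum_congr rfl step, Finset.sum_add_distrib, ← Finset.sum_mul, hqh,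
    ← Finset.sum_filter, Finset.filter_filter]
  have hfe : Z.filter (fun z => h <+: z ∧ h ++ [a] <+: z)
      = Z.filter (fun z => h ++ [a] <+: z) := by
    apply Finset.filter_congr
    intro z _
    constructor
    · exact fun hx => hx.2
    · exact fun hx => ⟨(h.prefix_append [a]).trans hx, hx⟩
  rw [hfe]
  have : ∑ z ∈ Z.filter (fun z => h ++ [a] <+: z), q z * ((B z - U z - bb) / xi)
      = (0 - pha * bb) / xi := by
    rw [← hG, ← hq, Finset.sum_mul, ← Finset.sum_sub_distrib, Finset.sum_div]
    apply Finset.sum_congr rfl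
    intro z _
    ring
  rw [this, hpha]
  field_simp
  ring

lemma G_zero (H Z : Finset (List A))
    (hclosed : ∀ h ∈ H, ∀ h' : List A, h' <+: h → h' ∈ H) (hZH : Z ⊆ H)
    (hreach : ∀ h ∈ H, ∃ z ∈ Z, h <+: z)
    (hterm : ∀ z ∈ Z, ∀ h ∈ H, z <+: h → z = h)
    (ξ : List A → A → ℝ)
    (hξpos : ∀ h ∈ H, h ∉ Z → ∀ a ∈ legal H h, 0 < ξ h a)
    (hξsum : ∀ h ∈ H, h ∉ Z → ∑ a ∈ legal H h, ξ h a = 1)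
    (σ : List A → A → ℝ) (u : List A → ℝ) (b : List A → A → ℝ) :
    ∀ n : ℕ, ∀ h ∈ H, (∀ z ∈ Z, z.length ≤ h.length + n) →
      ∑ z ∈ Z.filter (fun z => h <+: z),
        pathProd ξ z * (uhatB ξ σ u H b z h - uhat ξ σ u H z h) = 0 := by
  intro n
  induction n with
  | zero =>
    intro h hh hb
    by_cases hhZ : h ∈ Z
    · rw [filter_eq_singleton H Z hZH hterm hhZ, Finset.sum_singleton, uhatB, uhat]
      simp
    · obtain ⟨z, hz, hp⟩ := hreach h hh
      have hne : h ≠ z := fun e => hhZ (e ▸ hz)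
      have h1 : h.length < z.length :=
        lt_of_le_of_ne hp.length_le (fun e => hne (hp.eq_of_length e))
      have := hb z hz; omega
  | succ n ih =>
    intro h hh hb
    by_cases hhZ : h ∈ Z
    · rw [filter_eq_singleton H Z hZH hterm hhZ, Finset.sum_singleton, uhatB, uhat]
      simp
    · have step : ∀ z ∈ Z.filter (fun z => h <+: z),
          pathProd ξ z * (uhatB ξ σ u H b z h - uhat ξ σ u H z h)
          = ∑ a ∈ legal H h, σ h a * (pathProd ξ z *
              ((if h ++ [a] <+: z then
                  b h a + (uhatB ξ σ u H b z (h ++ [a]) - b h a) / ξ h a else b h a)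
               - (if h ++ [a] <+: z then uhat ξ σ u H z (h ++ [a]) / ξ h a else 0))) := by
        intro z hzf
        simp only [Finset.mem_filter] at hzf
        obtain ⟨hz, hp⟩ := hzf
        have hne : h ≠ z := fun e => hhZ (e ▸ hz)
        rw [uhatB, uhat]
        simp only [hne, if_false, hp, if_true, dite_eq_ite]
        rw [← Finset.sum_sub_distrib, Finset.mul_sum]
        apply Finset.sum_congr rfl
        intro a _
        ring
      rw [Finset.sum_congr rfl step, Finset.sum_comm]
      apply Finset.sum_eq_zero
      intro a ha
      have haH : h ++ [a] ∈ H := by simpa [legal] using ha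
      have hxi : ξ h a ≠ 0 := ne_of_gt (hξpos h hh hhZ a ha)
      rw [← Finset.mul_sum]
      rw [key_sum Z (pathProd ξ) (fun z => uhatB ξ σ u H b z (h ++ [a]))
        (fun z => uhat ξ σ u H z (h ++ [a])) (b h a) (ξ h a)
        (pathProd ξ h) (pathProd ξ (h ++ [a])) hxi h a
        (qsum H Z hclosed hZH hreach hterm ξ hξsum (n + 1) h hh hb)
        (qsum H Z hclosed hZH hreach hterm ξ hξsum n (h ++ [a]) haH
          (fun z hz => by have := hb z hz; simp; omega))
        (pathProd_append ξ h a)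
        (ih (h ++ [a]) haH (fun z hz => by have := hb z hz; simp; omega)), mul_zero]

end AuxLemmas

/-- **Baseline-enhanced values are unbiased estimates of the plain sampled values**
(Lemma 5 in the paper). For every nonterminal `h` and legal action `a` at `h`,
`E_{z∼ξ}[û_i^b(σ,h,a|z)] = E_{z∼ξ}[û_i(σ,h,a|z)]`. -/
theorem baseline_enhanced_value_unbiased
    (H Z : Finset (List A))
    (hempty : ([] : List A) ∈ H)
    (hclosed : ∀ h ∈ H, ∀ h' : List A, h' <+: h → h' ∈ H)
    (hZH : Z ⊆ H)
    (hreach : ∀ h ∈ H, ∃ z ∈ Z, h <+: z)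
    (hterm : ∀ z ∈ Z, ∀ h ∈ H, z <+: h → z = h)
    (hlegal : ∀ h ∈ H, h ∉ Z → (legal H h).Nonempty)
    (ξ : List A → A → ℝ)
    (hξpos : ∀ h ∈ H, h ∉ Z → ∀ a ∈ legal H h, 0 < ξ h a)
    (hξsum : ∀ h ∈ H, h ∉ Z → ∑ a ∈ legal H h, ξ h a = 1)
    (σ : List A → A → ℝ)
    (hσnn : ∀ h ∈ H, h ∉ Z → ∀ a ∈ legal H h, 0 ≤ σ h a)
    (hσsum : ∀ h ∈ H, h ∉ Z → ∑ a ∈ legal H h, σ h a = 1)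
    (u : List A → ℝ) (b : List A → A → ℝ)
    (h : List A) (hh : h ∈ H) (hhnt : h ∉ Z) (a : A) (ha : a ∈ legal H h) :
    (∑ z ∈ Z, pathProd ξ z * uhatBA ξ σ u H b z h a)
      = ∑ z ∈ Z, pathProd ξ z * uhatA ξ σ u H z h a := by
  classical
  rw [← sub_eq_zero, ← Finset.sum_sub_distrib]
  have hsupp : ∀ z ∈ Z,
      pathProd ξ z * uhatBA ξ σ u H b z h a - pathProd ξ z * uhatA ξ σ u H z h a ≠ 0 →
      h <+: z := by
    intro z _ hne0
    by_contra hp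
    apply hne0
    have hpa : ¬ h ++ [a] <+: z := fun hx => hp ((h.prefix_append [a]).trans hx)
    rw [uhatBA, uhatA]
    simp [hpa, hp]
  rw [← Finset.sum_filter_of_ne hsupp]
  have hxi : ξ h a ≠ 0 := ne_of_gt (hξpos h hh hhnt a ha)
  have haH : h ++ [a] ∈ H := by simpa [legal] using ha
  set n := Z.sup List.length with hn
  have hbnd : ∀ (w : List A), ∀ z ∈ Z, z.length ≤ w.length + n := by
    intro w z hz
    have := Finset.le_sup (f := List.length) hz
    omega
  have step : ∀ z ∈ Z.filter (fun z => h <+: z),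
      pathProd ξ z * uhatBA ξ σ u H b z h a - pathProd ξ z * uhatA ξ σ u H z h a
      = pathProd ξ z *
          ((if h ++ [a] <+: z then
              b h a + (uhatB ξ σ u H b z (h ++ [a]) - b h a) / ξ h a else b h a)
           - (if h ++ [a] <+: z then uhat ξ σ u H z (h ++ [a]) / ξ h a else 0)) := by
    intro z hzf
    simp only [Finset.mem_filter] at hzf
    obtain ⟨hz, hp⟩ := hzf
    have hne : h ≠ z := fun e => hhnt (e ▸ hz)
    rw [uhatBA, uhatA, ← mul_sub]
    by_cases hpa : h ++ [a] <+: z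
    · simp [hpa]
    · simp [hpa, hp, hne]
  rw [Finset.sum_congr rfl step]
  exact key_sum Z (pathProd ξ) (fun z => uhatB ξ σ u H b z (h ++ [a]))
    (fun z => uhat ξ σ u H z (h ++ [a])) (b h a) (ξ h a)
    (pathProd ξ h) (pathProd ξ (h ++ [a])) hxi h a
    (qsum H Z hclosed hZH hreach hterm ξ hξsum n h hh (hbnd h))
    (qsum H Z hclosed hZH hreach hterm ξ hξsum n (h ++ [a]) haH (hbnd (h ++ [a])))
    (pathProd_append ξ h a)
    (G_zero H Z hclosed hZH hreach hterm ξ hξpos hξsum σ u b n (h ++ [a]) haH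
      (hbnd (h ++ [a])))
end

section
/- The plain sampled value admits the closed form of an importance-weighted terminal utility: for every z ∈ Z and every h ∈ H with h ⊑ z, û_i(σ,h|z) = π^σ(h,z)·u_i(z)·q(h)/q(z). -/
open Finset

variable {A : Type*} [Fintype A] [DecidableEq A]

lemma take_of_snoc_prefix {A : Type*} {h z : List A} {a : A} (hp : h ++ [a] <+: z) :
    z.take h.length = h := by
  have hh : h <+: z := (h.prefix_append [a]).trans hp
  rw [List.prefix_iff_eq_take] at hh
  simpa using hh.symm

lemma get_of_snoc_prefix {A : Type*} {h z : List A} {a : A} (hl : h.length < z.length)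
    (hp : h ++ [a] <+: z) : z.get ⟨h.length, hl⟩ = a := by
  obtain ⟨t, rfl⟩ := hp
  rw [List.get_eq_getElem, List.getElem_append_left (by simp)]
  simp

lemma pathProd_snoc {A : Type*} [Fintype A] [DecidableEq A] (f : List A → A → ℝ)
    (h : List A) (a : A) : pathProd f (h ++ [a]) = pathProd f h * f h a := by
  unfold pathProd
  rw [← Fin.prod_congr' (fun k : Fin ((h ++ [a]).length) =>
      f ((h ++ [a]).take (k : ℕ)) ((h ++ [a]).get k))
      (show h.length + 1 = (h ++ [a]).length by simp), Fin.prod_univ_castSucc]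
  congr 1
  · apply Finset.prod_congr rfl
    intro k _
    have hk : (k : ℕ) < h.length := k.isLt
    congr 1
    · simp [List.take_append, Nat.sub_eq_zero_of_le hk.le]
    · rw [List.get_eq_getElem, List.getElem_append_left (by simpa using hk)]
      simp
  · have h1 : ((h ++ [a]).take h.length) = h := by
      simpa using take_of_snoc_prefix (List.prefix_refl (h ++ [a]))
    have h2 : ((h ++ [a]).get (Fin.cast (by simp) (Fin.last h.length))) = a := by
      exact get_of_snoc_prefix (by simp) (List.prefix_refl (h ++ [a]))
    simp only [Fin.coe_cast, Fin.val_last] at h1 h2 ⊢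
    rw [h1, h2]

lemma sfxProd_self {A : Type*} [Fintype A] [DecidableEq A] (σ : List A → A → ℝ)
    (z : List A) : sfxProd σ z z = 1 := by
  unfold sfxProd
  apply Finset.prod_eq_one
  intro k _
  simp [Nat.not_le.mpr k.isLt]

lemma sfxProd_step {A : Type*} [Fintype A] [DecidableEq A] (σ : List A → A → ℝ)
    {h z : List A} {a : A} (hp : h ++ [a] <+: z) :
    sfxProd σ h z = σ h a * sfxProd σ (h ++ [a]) z := by
  have hl : h.length < z.length := by
    have := hp.length_le; simp at this; omega
  unfold sfxProd
  set k0 : Fin z.length := ⟨h.length, hl⟩ with hk0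
  rw [← Finset.mul_prod_erase Finset.univ _ (Finset.mem_univ k0),
      ← Finset.mul_prod_erase Finset.univ
        (fun k : Fin z.length => if (h ++ [a]).length ≤ (k : ℕ) then σ (z.take (k : ℕ)) (z.get k) else 1)
        (Finset.mem_univ k0)]
  have e1 : (if h.length ≤ (k0 : ℕ) then σ (z.take (k0 : ℕ)) (z.get k0) else 1) = σ h a := by
    rw [if_pos (le_refl _)]
    rw [show z.take (k0 : ℕ) = h from take_of_snoc_prefix hp,
        show z.get k0 = a from get_of_snoc_prefix hl hp]
  have e2 : (if (h ++ [a]).length ≤ (k0 : ℕ) then σ (z.take (k0 : ℕ)) (z.get k0) else 1) = 1 := by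
    rw [if_neg]; simp [hk0]
  rw [e1, e2, one_mul]
  congr 1
  apply Finset.prod_congr rfl
  intro k hk
  have hne : (k : ℕ) ≠ h.length := by
    intro hc
    exact (Finset.mem_erase.mp hk).1 (Fin.ext hc)
  simp only [List.length_append, List.length_singleton]
  by_cases hc : h.length ≤ (k : ℕ)
  · rw [if_pos hc, if_pos (by omega)]
  · rw [if_neg hc, if_neg (by omega)]

/-- **Closed form of the plain sampled value.** For every `z ∈ Z` and `h ∈ H` with
`h ⊑ z`, the plain sampled value is the importance-weighted terminal utility:
`û_i(σ,h|z) = π^σ(h,z)·u_i(z)·q(h)/q(z)`. -/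
theorem uhat_closed_form
    (H Z : Finset (List A))
    (hempty : ([] : List A) ∈ H)
    (hclosed : ∀ h ∈ H, ∀ h' : List A, h' <+: h → h' ∈ H)
    (hZH : Z ⊆ H)
    (hreach : ∀ h ∈ H, ∃ z ∈ Z, h <+: z)
    (hterm : ∀ z ∈ Z, ∀ h ∈ H, z <+: h → z = h)
    (hlegal : ∀ h ∈ H, h ∉ Z → (legal H h).Nonempty)
    (ξ : List A → A → ℝ)
    (hξpos : ∀ h ∈ H, h ∉ Z → ∀ a ∈ legal H h, 0 < ξ h a)
    (hξsum : ∀ h ∈ H, h ∉ Z → ∑ a ∈ legal H h, ξ h a = 1)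
    (σ : List A → A → ℝ)
    (hσnn : ∀ h ∈ H, h ∉ Z → ∀ a ∈ legal H h, 0 ≤ σ h a)
    (hσsum : ∀ h ∈ H, h ∉ Z → ∑ a ∈ legal H h, σ h a = 1)
    (u : List A → ℝ) :
    ∀ z ∈ Z, ∀ h ∈ H, h <+: z →
      uhat ξ σ u H z h = sfxProd σ h z * u z * pathProd ξ h / pathProd ξ z := by
  intro z hz
  have hzH := hZH hz
  have hqpos : 0 < pathProd ξ z := by
    apply Finset.prod_pos
    intro k _
    have htk : z.take (k : ℕ) <+: z := z.take_prefix _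
    have h1 : z.take (k : ℕ) ∈ H := hclosed z hzH _ htk
    have h2 : z.take (k : ℕ) ∉ Z := by
      intro hmem
      have heq := hterm _ hmem z hzH htk
      have : (z.take (k : ℕ)).length = z.length := by rw [heq]
      simp only [List.length_take] at this
      omega
    have hpa : z.take (k : ℕ) ++ [z.get k] <+: z := by
      have := List.take_concat_get (l := z) (i := (k : ℕ)) k.isLt
      simp only [List.concat_eq_append] at this
      rw [List.get_eq_getElem, this]
      exact z.take_prefix _
    apply hξpos _ h1 h2
    simp only [legal, Finset.mem_filter, Finset.mem_univ, true_and]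
    exact hclosed z hzH _ hpa
  have hbase : uhat ξ σ u H z z = sfxProd σ z z * u z * pathProd ξ z / pathProd ξ z := by
    rw [uhat, if_pos rfl, sfxProd_self, one_mul, mul_div_assoc, div_self hqpos.ne', mul_one]
  have key : ∀ n : ℕ, ∀ h, h ∈ H → h <+: z → z.length - h.length ≤ n →
      uhat ξ σ u H z h = sfxProd σ h z * u z * pathProd ξ h / pathProd ξ z := by
    intro n
    induction n with
    | zero =>
      intro h hH hp hn
      have : h = z := hp.eq_of_length (by have := hp.length_le; omega)
      subst this
      exact hbase
    | succ n ih =>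
      intro h hH hp hn
      by_cases heq : h = z
      · subst heq; exact hbase
      · have hlt : h.length < z.length := by
          have h1 := hp.length_le
          rcases lt_or_eq_of_le h1 with h2 | h2
          · exact h2
          · exact absurd (hp.eq_of_length h2) heq
        set a : A := z.get ⟨h.length, hlt⟩ with ha
        have hpa : h ++ [a] <+: z := by
          have hh : z.take h.length = h := by
            have := List.prefix_iff_eq_take.mp hp
            exact this.symm
          have := List.take_concat_get (l := z) (i := h.length) hlt
          simp only [List.concat_eq_append] at this
          rw [hh] at this
          rw [ha, List.get_eq_getElem, this]
          exact z.take_prefix _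
        have haH : h ++ [a] ∈ H := hclosed z hzH _ hpa
        have haleg : a ∈ legal H h := by
          simp only [legal, Finset.mem_filter, Finset.mem_univ, true_and]
          exact haH
        have hnZ : h ∉ Z := fun hmem => heq (hterm h hmem z hzH hp)
        have hxi : 0 < ξ h a := hξpos h hH hnZ a haleg
        rw [uhat]
        rw [if_neg heq, if_pos hp]
        rw [Finset.sum_eq_single a]
        · rw [dif_pos hpa,
            ih (h ++ [a]) haH hpa (by have := hpa.length_le; simp only [List.length_append, List.length_singleton] at this ⊢; omega),
            sfxProd_step σ hpa, pathProd_snoc]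
          field_simp
        · intro b _ hba
          rw [dif_neg, mul_zero]
          intro hpb
          exact hba (ha.trans (get_of_snoc_prefix hlt hpb)).symm
        · intro hna
          exact absurd haleg hna
  exact fun h hH hp => key (z.length - h.length) h hH hp le_rfl
end
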